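/- Let ρ ∈ (0,1) and let (x_n), (y_n), (z_n) be sequences of nonnegative reals such that x_{n+1}^2 ≤ (ρ x_n + y_{n+1})^2 + z_{n+1}^2 for all n ≥ 0. Then for every n, x_n ≤ ρ^n x_0 + Σ_{k=1}^{n} ρ^{n-k} y_k + ( Σ_{k=1}^{n} ρ^{2(n-k)} z_k^2 )^{1/2}. -/

import Mathlib

theorem recursive_bound_rho (ρ : ℝ) (hρ0 : 0 < ρ) (hρ1 : ρ < 1)
    (x y z : ℕ → ℝ) (hx : ∀ n, 0 ≤ x n) (hy : ∀ n, 0 ≤ y n) (hz : ∀ n, 0 ≤ z n)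
    (hrec : ∀ n, x (n + 1) ^ 2 ≤ (ρ * x n + y (n + 1)) ^ 2 + z (n + 1) ^ 2) :
    ∀ n, x n ≤ ρ ^ n * x 0
        + ∑ k ∈ Finset.Icc 1 n, ρ ^ (n - k) * y k
        + Real.sqrt (∑ k ∈ Finset.Icc 1 n, ρ ^ (2 * (n - k)) * z k ^ 2) := by
  intro n
  induction n with
  | zero => simp [hx 0]
  | succ n ih =>
    set A : ℝ := ρ ^ n * x 0 + ∑ k ∈ Finset.Icc 1 n, ρ ^ (n - k) * y k with hA
    set S : ℝ := ∑ k ∈ Finset.Icc 1 n, ρ ^ (2 * (n - k)) * z k ^ 2 with hS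
    have hSnn : 0 ≤ S := Finset.sum_nonneg fun k _ => by positivity
    have hAnn : 0 ≤ A := by
      have := hx 0
      have : 0 ≤ ρ ^ n * x 0 := by positivity
      have h2 : 0 ≤ ∑ k ∈ Finset.Icc 1 n, ρ ^ (n - k) * y k :=
        Finset.sum_nonneg fun k _ => by have := hy k; positivity
      linarith
    have hle : (1:ℕ) ≤ n + 1 := Nat.succ_le_succ (Nat.zero_le n)
    have hA1 : ρ ^ (n + 1) * x 0 + ∑ k ∈ Finset.Icc 1 (n + 1), ρ ^ (n + 1 - k) * y k
        = ρ * A + y (n + 1) := by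
      rw [Finset.sum_Icc_succ_top hle, hA]
      have h1 : ∑ k ∈ Finset.Icc 1 n, ρ ^ (n + 1 - k) * y k
          = ρ * ∑ k ∈ Finset.Icc 1 n, ρ ^ (n - k) * y k := by
        rw [Finset.mul_sum]
        refine Finset.sum_congr rfl fun k hk => ?_
        have hk' : k ≤ n := (Finset.mem_Icc.mp hk).2
        have : n + 1 - k = (n - k) + 1 := by omega
        rw [this, pow_succ]; ring
      rw [h1]; simp; ring
    have hS1 : ∑ k ∈ Finset.Icc 1 (n + 1), ρ ^ (2 * (n + 1 - k)) * z k ^ 2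
        = ρ ^ 2 * S + z (n + 1) ^ 2 := by
      rw [Finset.sum_Icc_succ_top hle, hS]
      have h1 : ∑ k ∈ Finset.Icc 1 n, ρ ^ (2 * (n + 1 - k)) * z k ^ 2
          = ρ ^ 2 * ∑ k ∈ Finset.Icc 1 n, ρ ^ (2 * (n - k)) * z k ^ 2 := by
        rw [Finset.mul_sum]
        refine Finset.sum_congr rfl fun k hk => ?_
        have hk' : k ≤ n := (Finset.mem_Icc.mp hk).2
        have : 2 * (n + 1 - k) = 2 * (n - k) + 2 := by omega
        rw [this, pow_add]; ring
      rw [h1]; simp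
    rw [hA1, hS1]
    set B : ℝ := ρ * A + y (n + 1) with hB
    have hBnn : 0 ≤ B := by have := hy (n+1); positivity
    have hznn := hz (n + 1)
    set T : ℝ := ρ ^ 2 * S + z (n + 1) ^ 2 with hT
    have hTnn : 0 ≤ T := by positivity
    -- step 1 : x(n+1)^2 ≤ (B + ρ * sqrt S)^2 + z^2
    have step1 : x (n + 1) ^ 2 ≤ (B + ρ * Real.sqrt S) ^ 2 + z (n + 1) ^ 2 := by
      refine (hrec n).trans (add_le_add_left ?_ _)
      have h1 : ρ * x n + y (n + 1) ≤ B + ρ * Real.sqrt S := by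
        have := mul_le_mul_of_nonneg_left ih hρ0.le
        rw [hB]; nlinarith
      have h0 : 0 ≤ ρ * x n + y (n + 1) := by have := hx n; have := hy (n+1); positivity
      exact pow_le_pow_left₀ h0 h1 2
    -- step 2 : (B + ρ√S)^2 + z^2 ≤ (B + √T)^2
    have hsq : Real.sqrt S ^ 2 = S := Real.sq_sqrt hSnn
    have hsqT : Real.sqrt T ^ 2 = T := Real.sq_sqrt hTnn
    have hrs : ρ * Real.sqrt S ≤ Real.sqrt T := by
      have : ρ * Real.sqrt S = Real.sqrt (ρ ^ 2 * S) := by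
        rw [Real.sqrt_mul (by positivity), Real.sqrt_sq hρ0.le]
      rw [this]
      exact Real.sqrt_le_sqrt (by nlinarith)
    have step2 : (B + ρ * Real.sqrt S) ^ 2 + z (n + 1) ^ 2 ≤ (B + Real.sqrt T) ^ 2 := by
      have hrs2 : (ρ * Real.sqrt S) ^ 2 = ρ ^ 2 * S := by rw [mul_pow, hsq]
      nlinarith [mul_le_mul_of_nonneg_left hrs hBnn]
    -- conclude
    have hfin : x (n + 1) ^ 2 ≤ (B + Real.sqrt T) ^ 2 := step1.trans step2
    have hBT : 0 ≤ B + Real.sqrt T := by positivity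
    calc x (n + 1) = Real.sqrt (x (n + 1) ^ 2) := (Real.sqrt_sq (hx (n + 1))).symm
      _ ≤ Real.sqrt ((B + Real.sqrt T) ^ 2) := Real.sqrt_le_sqrt hfin
      _ = B + Real.sqrt T := Real.sqrt_sq hBT
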